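/- Let ν ≥ 2 and let Ψ be a set of coverings with #Ψ ≥ 2 such that s = #Ψ is a prime number. Then exactly one of the following holds: (a) Ψ is flat or a pole; (b) F_Ψ splits across no nontrivial bipartition of Γ_{2ν} (the RVB state |Ψ⟩ is genuinely multipartite entangled). Equivalently, under the primality of s: F_Ψ splits across some nontrivial bipartition if and only if Ψ is flat or a pole. -/

import Mathlib

open MvPolynomial Finset

noncomputable section

/-- The odd-labelled site `2t−1` of the paper (`t`-th site of sublattice `A`),
zero-indexed as `2t` in `Fin (2ν)`. -/
def siteA (ν : ℕ) (t : Fin ν) : Fin (2 * ν) := ⟨2 * t.val, by have := t.isLt; omega⟩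

/-- The even-labelled site `2t` of the paper (`t`-th site of sublattice `B`),
zero-indexed as `2t+1` in `Fin (2ν)`. -/
def siteB (ν : ℕ) (t : Fin ν) : Fin (2 * ν) := ⟨2 * t.val + 1, by have := t.isLt; omega⟩

/-- A covering is a bijection `ψ : A → B`; it is encoded by the permutation
`σ` of `Fin ν` with `ψ(siteA t) = siteB (σ t)`.  Its covering polynomial is
`F_ψ = ∏_{a∈A} (X_{ψ(a)} − X_a)`. -/
def covPoly (ν : ℕ) (σ : Equiv.Perm (Fin ν)) : MvPolynomial (Fin (2 * ν)) ℂ :=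
  ∏ t : Fin ν, (X (siteB ν (σ t)) - X (siteA ν t))

/-- `F` splits across the bipartition `(E, Eᶜ)`. -/
def SplitsAcross {n : ℕ} (F : MvPolynomial (Fin n) ℂ) (E : Finset (Fin n)) : Prop :=
  ∃ p q : MvPolynomial (Fin n) ℂ, F = p * q ∧ p.vars ⊆ E ∧ q.vars ⊆ Eᶜ

/-- `ψ(E ∩ A) = E ∩ B` for the covering `ψ` encoded by `σ`
(here `E ∩ B` is the set of odd-indexed, i.e. `B`-sublattice, elements of `E`). -/
def MapsCut (ν : ℕ) (σ : Equiv.Perm (Fin ν)) (E : Finset (Fin (2 * ν))) : Prop :=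
  ((Finset.univ.filter (fun t => siteA ν t ∈ E)).image fun t => siteB ν (σ t))
    = E.filter (fun x => x.val % 2 = 1)


/-- The (unnormalized) RVB polynomial `F_Ψ = Σ_{ψ∈Ψ} F_ψ`. -/
def rvbPoly (ν : ℕ) (Ψ : Finset (Equiv.Perm (Fin ν))) : MvPolynomial (Fin (2 * ν)) ℂ :=
  ∑ σ ∈ Ψ, covPoly ν σ

/-- `Ψ` is flat via `E`: decomposable via `E` and all coverings in `Ψ` have the
same restriction to `E' ∩ A`. -/
def FlatVia (ν : ℕ) (Ψ : Finset (Equiv.Perm (Fin ν))) (E : Finset (Fin (2 * ν))) : Prop :=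
  (∀ σ ∈ Ψ, MapsCut ν σ E) ∧
  ∀ σ₁ ∈ Ψ, ∀ σ₂ ∈ Ψ, ∀ t : Fin ν, siteA ν t ∉ E → σ₁ t = σ₂ t

/-- `Ψ` is a pole via `E`: decomposable via `E` and all coverings in `Ψ` have the
same restriction to `E ∩ A`. -/
def PoleVia (ν : ℕ) (Ψ : Finset (Equiv.Perm (Fin ν))) (E : Finset (Fin (2 * ν))) : Prop :=
  (∀ σ ∈ Ψ, MapsCut ν σ E) ∧
  ∀ σ₁ ∈ Ψ, ∀ σ₂ ∈ Ψ, ∀ t : Fin ν, siteA ν t ∈ E → σ₁ t = σ₂ t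


namespace RVBProof

variable {ν : ℕ}

/-! ### Basic site lemmas -/

lemma siteA_inj : Function.Injective (siteA ν) := fun a b h => by
  have : 2 * a.val = 2 * b.val := congrArg Fin.val h
  exact Fin.ext (by omega)

lemma siteB_inj : Function.Injective (siteB ν) := fun a b h => by
  have : 2 * a.val + 1 = 2 * b.val + 1 := congrArg Fin.val h
  exact Fin.ext (by omega)

lemma siteA_ne_siteB (t u : Fin ν) : siteA ν t ≠ siteB ν u := fun h => by
  have : 2 * t.val = 2 * u.val + 1 := congrArg Fin.val h
  omega

lemma site_cases (x : Fin (2 * ν)) : (∃ t, x = siteA ν t) ∨ ∃ u, x = siteB ν u := by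
  have hx := x.isLt
  rcases Nat.even_or_odd x.val with ⟨k, hk⟩ | ⟨k, hk⟩
  · exact Or.inl ⟨⟨k, by omega⟩, Fin.ext (by simp only [siteA]; omega)⟩
  · exact Or.inr ⟨⟨k, by omega⟩, Fin.ext (by simp only [siteB]; omega)⟩

lemma siteB_odd (u : Fin ν) : (siteB ν u).val % 2 = 1 := by simp only [siteB]; omega

lemma siteA_even (t : Fin ν) : (siteA ν t).val % 2 = 0 := by simp only [siteA]; omega

/-! ### The square-free monomial attached to a pair of subsets -/

/-- The exponent finsupp of the monomial `∏_{t∈S} X_{siteA t} · ∏_{u∈U} X_{siteB u}`. -/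
def MSU (ν : ℕ) (S U : Finset (Fin ν)) : Fin (2 * ν) →₀ ℕ :=
  (∑ t ∈ S, Finsupp.single (siteA ν t) 1) + ∑ u ∈ U, Finsupp.single (siteB ν u) 1

lemma MSU_apply_A (S U : Finset (Fin ν)) (t : Fin ν) :
    MSU ν S U (siteA ν t) = if t ∈ S then 1 else 0 := by
  classical
  have hB : ∀ u : Fin ν, (siteB ν u = siteA ν t) = False :=
    fun u => eq_false fun h => siteA_ne_siteB t u h.symm
  simp only [MSU, Finsupp.add_apply, Finsupp.finset_sum_apply, Finsupp.single_apply,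
    siteA_inj.eq_iff, hB, if_false, Finset.sum_const_zero, add_zero]
  simp

lemma MSU_apply_B (S U : Finset (Fin ν)) (u : Fin ν) :
    MSU ν S U (siteB ν u) = if u ∈ U then 1 else 0 := by
  classical
  have hA : ∀ t : Fin ν, (siteA ν t = siteB ν u) = False :=
    fun t => eq_false (siteA_ne_siteB t u)
  simp only [MSU, Finsupp.add_apply, Finsupp.finset_sum_apply, Finsupp.single_apply,
    siteB_inj.eq_iff, hA, if_false, Finset.sum_const_zero, zero_add]
  simp

lemma MSU_inj {S U S' U' : Finset (Fin ν)} (h : MSU ν S U = MSU ν S' U') :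
    S = S' ∧ U = U' := by
  constructor
  · refine Finset.ext fun a => ?_
    have h1 : (if a ∈ S then (1:ℕ) else 0) = (if a ∈ S' then 1 else 0) := by
      rw [← MSU_apply_A S U a, ← MSU_apply_A S' U' a, h]
    split_ifs at h1 <;> simp_all
  · refine Finset.ext fun a => ?_
    have h1 : (if a ∈ U then (1:ℕ) else 0) = (if a ∈ U' then 1 else 0) := by
      rw [← MSU_apply_B S U a, ← MSU_apply_B S' U' a, h]
    split_ifs at h1 <;> simp_all

lemma MSU_filter (S U : Finset (Fin ν)) (P : Fin (2 * ν) → Prop) [DecidablePred P] :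
    (MSU ν S U).filter P
      = MSU ν (S.filter (fun t => P (siteA ν t))) (U.filter (fun u => P (siteB ν u))) := by
  ext x
  rcases site_cases x with ⟨t, rfl⟩ | ⟨u, rfl⟩
  · rw [Finsupp.filter_apply, MSU_apply_A, MSU_apply_A]
    by_cases h1 : P (siteA ν t) <;> by_cases h2 : t ∈ S <;>
      simp [h1, h2, Finset.mem_filter]
  · rw [Finsupp.filter_apply, MSU_apply_B, MSU_apply_B]
    by_cases h1 : P (siteB ν u) <;> by_cases h2 : u ∈ U <;>
      simp [h1, h2, Finset.mem_filter]

lemma weight_one_single (x : Fin (2 * ν)) :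
    Finsupp.weight (1 : Fin (2 * ν) → ℕ) (Finsupp.single x 1) = 1 := by
  simp [Finsupp.weight_apply, Finsupp.sum_single_index]

lemma MSU_degree (S U : Finset (Fin ν)) :
    (MSU ν S U).degree = S.card + U.card := by
  have hd : (MSU ν S U).degree = Finsupp.weight 1 (MSU ν S U) :=
    DFunLike.congr_fun Finsupp.degree_eq_weight_one _
  rw [hd, MSU, map_add, map_sum, map_sum]
  simp [weight_one_single]

/-! ### Coefficients of the covering and RVB polynomials -/

lemma prod_X_eq (S : Finset (Fin ν)) (f : Fin ν → Fin (2 * ν)) :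
    (∏ t ∈ S, (X (f t) : MvPolynomial (Fin (2 * ν)) ℂ))
      = monomial (∑ t ∈ S, Finsupp.single (f t) 1) 1 := by
  classical
  induction S using Finset.induction_on with
  | empty => simp [monomial_zero']
  | insert _ _ h ih =>
      rw [Finset.prod_insert h, ih, Finset.sum_insert h,
        show (X (f _) : MvPolynomial (Fin (2 * ν)) ℂ) = monomial (Finsupp.single (f _) 1) 1 from
          by rw [← X_pow_eq_monomial, pow_one], monomial_mul, one_mul]

lemma coeff_covPoly (σ : Equiv.Perm (Fin ν)) (S U : Finset (Fin ν)) :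
    coeff (MSU ν S U) (covPoly ν σ)
      = if Sᶜ.image σ = U then ((-1 : ℂ)) ^ S.card else 0 := by
  classical
  have hrw : covPoly ν σ
      = ∑ T ∈ (univ : Finset (Fin ν)).powerset,
          monomial (MSU ν (univ \ T) (T.image ⇑σ)) ((-1 : ℂ) ^ (univ \ T).card) := by
    rw [covPoly,
      show (∏ t : Fin ν, (X (siteB ν (σ t)) - X (siteA ν t)) : MvPolynomial (Fin (2 * ν)) ℂ)
        = ∏ t : Fin ν, ((X (siteB ν (σ t)) : MvPolynomial (Fin (2 * ν)) ℂ) + -X (siteA ν t))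
      from Finset.prod_congr rfl fun t _ => sub_eq_add_neg _ _,
      Finset.prod_add]
    refine Finset.sum_congr rfl fun T hT => ?_
    have h1 : (∏ t ∈ T, (X (siteB ν (σ t)) : MvPolynomial (Fin (2 * ν)) ℂ))
        = monomial (∑ u ∈ T.image ⇑σ, Finsupp.single (siteB ν u) 1) 1 := by
      rw [prod_X_eq, Finset.sum_image (fun x _ y _ h => σ.injective h)]
    have h2 : (∏ t ∈ univ \ T, (-X (siteA ν t) : MvPolynomial (Fin (2 * ν)) ℂ))
        = monomial (∑ t ∈ univ \ T, Finsupp.single (siteA ν t) 1) ((-1 : ℂ) ^ (univ \ T).card) := by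
      have : (∏ t ∈ univ \ T, (-X (siteA ν t) : MvPolynomial (Fin (2 * ν)) ℂ))
          = (∏ _t ∈ univ \ T, (C (-1 : ℂ))) * ∏ t ∈ univ \ T, (X (siteA ν t) : MvPolynomial (Fin (2 * ν)) ℂ) := by
        rw [← Finset.prod_mul_distrib]
        refine Finset.prod_congr rfl fun t _ => ?_
        rw [map_neg, map_one, neg_one_mul]
      rw [this, Finset.prod_const, ← map_pow, prod_X_eq, C_mul_monomial, mul_one]
    rw [h1, h2, monomial_mul, one_mul, MSU, add_comm]
  rw [hrw, coeff_sum]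
  rw [Finset.sum_congr rfl fun T _ => coeff_monomial (MSU ν S U) _ _]
  rw [Finset.sum_eq_single_of_mem Sᶜ (Finset.mem_powerset.mpr (Finset.subset_univ _))]
  · have hUS : univ \ Sᶜ = S := by rw [← Finset.compl_eq_univ_sdiff, compl_compl]
    rw [hUS]
    by_cases hc : Sᶜ.image ⇑σ = U
    · rw [if_pos hc, if_pos (by rw [hc])]
    · rw [if_neg hc, if_neg (fun h => hc (MSU_inj h).2)]
  · intro T hT hTne
    rw [if_neg]
    intro h
    obtain ⟨h1, -⟩ := MSU_inj h
    apply hTne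
    have : univ \ (univ \ T) = T := by
      rw [Finset.sdiff_sdiff_self_left, Finset.univ_inter]
    rw [← this, h1, Finset.compl_eq_univ_sdiff]

lemma coeff_rvbPoly (Ψ : Finset (Equiv.Perm (Fin ν))) (S U : Finset (Fin ν)) :
    coeff (MSU ν S U) (rvbPoly ν Ψ)
      = ((-1 : ℂ)) ^ S.card * ((Ψ.filter (fun σ : Equiv.Perm (Fin ν) => Sᶜ.image (⇑σ) = U)).card : ℂ) := by
  classical
  rw [rvbPoly, coeff_sum, Finset.sum_congr rfl fun σ _ => coeff_covPoly σ S U,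
    ← Finset.sum_filter, Finset.sum_const, nsmul_eq_mul, mul_comm]

lemma covPoly_homog (σ : Equiv.Perm (Fin ν)) : (covPoly ν σ).IsHomogeneous ν := by
  have h := MvPolynomial.IsHomogeneous.prod univ
    (fun t => (X (siteB ν (σ t)) - X (siteA ν t) : MvPolynomial (Fin (2 * ν)) ℂ)) (fun _ => 1)
    (fun t _ => ((isHomogeneous_X ℂ _).sub (isHomogeneous_X ℂ _)))
  simpa [covPoly] using h

lemma rvb_homog (Ψ : Finset (Equiv.Perm (Fin ν))) : (rvbPoly ν Ψ).IsHomogeneous ν :=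
  MvPolynomial.IsHomogeneous.sum _ _ _ fun σ _ => covPoly_homog σ

lemma degree_eq_of_coeff_ne {Ψ : Finset (Equiv.Perm (Fin ν))} {S U : Finset (Fin ν)}
    (h : coeff (MSU ν S U) (rvbPoly ν Ψ) ≠ 0) : S.card + U.card = ν := by
  by_contra hd
  exact h ((rvb_homog Ψ).coeff_eq_zero (by rw [MSU_degree]; exact hd))

/-! ### Coefficients of a split product -/

lemma split_coeff {n : ℕ} {p q : MvPolynomial (Fin n) ℂ} {E : Finset (Fin n)}
    (hp : p.vars ⊆ E) (hq : q.vars ⊆ Eᶜ) (m : Fin n →₀ ℕ) :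
    coeff m (p * q)
      = coeff (m.filter (fun x => x ∈ E)) p * coeff (m.filter (fun x => x ∉ E)) q := by
  classical
  rw [coeff_mul]
  have hmem : (m.filter (fun x => x ∈ E), m.filter (fun x => x ∉ E)) ∈ Finset.HasAntidiagonal.antidiagonal m := by
    rw [Finset.HasAntidiagonal.mem_antidiagonal]
    exact Finsupp.filter_pos_add_filter_neg m _
  refine Finset.sum_eq_single_of_mem _ hmem ?_
  rintro ⟨a, b⟩ hab hne
  rw [Finset.HasAntidiagonal.mem_antidiagonal] at hab
  by_contra h0
  have ha : coeff a p ≠ 0 := fun h => h0 (by simp [h])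
  have hb : coeff b q ≠ 0 := fun h => h0 (by simp [h])
  have hasupp : ∀ x ∈ a.support, x ∈ E := fun x hx =>
    hp ((mem_vars x).mpr ⟨a, MvPolynomial.mem_support_iff.mpr ha, hx⟩)
  have hbsupp : ∀ x ∈ b.support, x ∉ E := fun x hx =>
    Finset.mem_compl.mp (hq ((mem_vars x).mpr ⟨b, MvPolynomial.mem_support_iff.mpr hb, hx⟩))
  apply hne
  have hadd : ∀ x, a x + b x = m x := fun x => by rw [← Finsupp.add_apply, hab]
  have hA : a = m.filter (fun x => x ∈ E) := by
    ext x
    rw [Finsupp.filter_apply]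
    by_cases hx : x ∈ E
    · have hbx : b x = 0 := Finsupp.notMem_support_iff.mp fun hxb => hbsupp x hxb hx
      have := hadd x
      rw [if_pos hx]
      omega
    · rw [if_neg hx]
      exact Finsupp.notMem_support_iff.mp fun hxa => hx (hasupp x hxa)
  have hB : b = m.filter (fun x => x ∉ E) := by
    ext x
    rw [Finsupp.filter_apply]
    by_cases hx : x ∈ E
    · rw [if_neg (not_not_intro hx)]
      exact Finsupp.notMem_support_iff.mp fun hxb => hbsupp x hxb hx
    · have hax : a x = 0 := Finsupp.notMem_support_iff.mp fun hxa => hx (hasupp x hxa)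
      have := hadd x
      rw [if_pos hx]
      omega
  rw [Prod.ext_iff]
  exact ⟨hA, hB⟩

/-! ### Permutation/finset lemmas -/

lemma image_perm_compl (σ : Equiv.Perm (Fin ν)) (S : Finset (Fin ν)) :
    Sᶜ.image σ = (S.image σ)ᶜ := by
  ext u
  simp only [Finset.mem_image, Finset.mem_compl]
  constructor
  · rintro ⟨a, haS, rfl⟩ ⟨b, hbS, hb⟩
    exact haS (by rwa [σ.injective hb] at hbS)
  · intro hu
    exact ⟨σ.symm u, fun hs => hu ⟨σ.symm u, hs, σ.apply_symm_apply u⟩, σ.apply_symm_apply u⟩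

lemma image_perm_univ (σ : Equiv.Perm (Fin ν)) :
    (univ : Finset (Fin ν)).image σ = univ := by
  have h := image_perm_compl σ ∅
  simpa using h

lemma single_cond (σ : Equiv.Perm (Fin ν)) (t u : Fin ν) :
    ({t}ᶜ : Finset (Fin ν)).image σ = univ.erase u ↔ σ t = u := by
  have h1 : (univ.erase u : Finset (Fin ν)) = ({u}ᶜ : Finset (Fin ν)) := by ext x; simp
  rw [h1, image_perm_compl, Finset.image_singleton]
  constructor
  · intro h
    have h2 : ({σ t} : Finset (Fin ν)) = {u} := by
      have := congrArg (·ᶜ) h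
      simpa using this
    exact Finset.singleton_injective h2
  · rintro rfl; rfl

lemma pair_cond (σ : Equiv.Perm (Fin ν)) {t t' u u' : Fin ν} (ht : t ≠ t') (hu : u ≠ u') :
    ({t, t'}ᶜ : Finset (Fin ν)).image σ = univ \ {u, u'}
      ↔ (σ t = u ∧ σ t' = u') ∨ (σ t = u' ∧ σ t' = u) := by
  have h1 : (univ \ {u, u'} : Finset (Fin ν)) = ({u, u'}ᶜ : Finset (Fin ν)) :=
    (Finset.compl_eq_univ_sdiff _).symm
  have h2 : ({t, t'} : Finset (Fin ν)).image ⇑σ = {σ t, σ t'} := by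
    rw [Finset.image_insert, Finset.image_singleton]
  rw [h1, image_perm_compl, h2]
  constructor
  · intro h
    have h3 : ({σ t, σ t'} : Finset (Fin ν)) = {u, u'} := by
      have := congrArg (·ᶜ) h
      simpa using this
    have hmt : σ t ∈ ({u, u'} : Finset (Fin ν)) := by rw [← h3]; simp
    have hmt' : σ t' ∈ ({u, u'} : Finset (Fin ν)) := by rw [← h3]; simp
    simp only [Finset.mem_insert, Finset.mem_singleton] at hmt hmt'
    rcases hmt with h4 | h4 <;> rcases hmt' with h5 | h5
    · exact absurd (σ.injective (h4.trans h5.symm)) ht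
    · exact Or.inl ⟨h4, h5⟩
    · exact Or.inr ⟨h4, h5⟩
    · exact absurd (σ.injective (h4.trans h5.symm)) ht
  · rintro (⟨h4, h5⟩ | ⟨h4, h5⟩)
    · rw [h4, h5]
    · rw [h4, h5, Finset.pair_comm]

lemma filter_odd_eq (E : Finset (Fin (2 * ν))) :
    E.filter (fun x => x.val % 2 = 1)
      = (univ.filter fun u => siteB ν u ∈ E).image (siteB ν) := by
  ext x
  simp only [Finset.mem_filter, Finset.mem_image, Finset.mem_univ, true_and]
  constructor
  · rintro ⟨hxE, hodd⟩
    rcases site_cases x with ⟨t, rfl⟩ | ⟨u, rfl⟩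
    · rw [siteA_even] at hodd; omega
    · exact ⟨u, hxE, rfl⟩
  · rintro ⟨u, huE, rfl⟩
    exact ⟨huE, siteB_odd u⟩

lemma mapsCut_iff (σ : Equiv.Perm (Fin ν)) (E : Finset (Fin (2 * ν))) :
    MapsCut ν σ E ↔
      (univ.filter fun t => siteA ν t ∈ E).image σ = univ.filter fun u => siteB ν u ∈ E := by
  rw [MapsCut]
  have h1 : ((univ.filter (fun t => siteA ν t ∈ E)).image fun t => siteB ν (σ t))
      = ((univ.filter (fun t => siteA ν t ∈ E)).image ⇑σ).image (siteB ν) := by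
    rw [Finset.image_image]; rfl
  rw [h1, filter_odd_eq]
  exact ⟨fun h => Finset.image_injective siteB_inj h, fun h => congrArg _ h⟩

/-! ### Forward direction -/

lemma splits_of_flat {Ψ : Finset (Equiv.Perm (Fin ν))} {E : Finset (Fin (2 * ν))}
    (hne : Ψ.Nonempty) (h : FlatVia ν Ψ E) : SplitsAcross (rvbPoly ν Ψ) E := by
  classical
  obtain ⟨σ₀, hσ₀⟩ := hne
  refine ⟨∑ σ ∈ Ψ, ∏ t ∈ univ.filter (fun t => siteA ν t ∈ E),
            (X (siteB ν (σ t)) - X (siteA ν t)),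
          ∏ t ∈ univ.filter (fun t => ¬siteA ν t ∈ E),
            (X (siteB ν (σ₀ t)) - X (siteA ν t)), ?_, ?_, ?_⟩
  · rw [rvbPoly, Finset.sum_mul]
    refine Finset.sum_congr rfl fun σ hσ => ?_
    rw [covPoly, ← Finset.prod_filter_mul_prod_filter_not univ (fun t => siteA ν t ∈ E)]
    congr 1
    refine Finset.prod_congr rfl fun t ht => ?_
    rw [h.2 σ hσ σ₀ hσ₀ t (Finset.mem_filter.mp ht).2]
  · intro x hx
    obtain ⟨σ, hσ, hxv⟩ := Finset.mem_biUnion.mp (vars_sum_subset _ _ hx)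
    obtain ⟨t, ht, hxt⟩ := Finset.mem_biUnion.mp (vars_prod _ hxv)
    have ht' := Finset.mem_filter.mp ht
    have hx2 : x ∈ ({siteB ν (σ t)} ∪ {siteA ν t} : Finset (Fin (2 * ν))) := by
      have hss := vars_sub_subset (σ := Fin (2 * ν))
        (p := (X (siteB ν (σ t)) : MvPolynomial (Fin (2 * ν)) ℂ)) (q := X (siteA ν t))
      rw [vars_X, vars_X] at hss
      exact hss hxt
    rcases Finset.mem_union.mp hx2 with h1 | h1
    · have hBE : σ t ∈ univ.filter (fun u => siteB ν u ∈ E) := by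
        rw [← (mapsCut_iff σ E).mp (h.1 σ hσ)]
        exact Finset.mem_image_of_mem _ ht
      rw [Finset.mem_singleton.mp h1]
      exact (Finset.mem_filter.mp hBE).2
    · rw [Finset.mem_singleton.mp h1]
      exact ht'.2
  · intro x hx
    obtain ⟨t, ht, hxt⟩ := Finset.mem_biUnion.mp (vars_prod _ hx)
    have ht' := (Finset.mem_filter.mp ht).2
    have hx2 : x ∈ ({siteB ν (σ₀ t)} ∪ {siteA ν t} : Finset (Fin (2 * ν))) := by
      have hss := vars_sub_subset (σ := Fin (2 * ν))
        (p := (X (siteB ν (σ₀ t)) : MvPolynomial (Fin (2 * ν)) ℂ)) (q := X (siteA ν t))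
      rw [vars_X, vars_X] at hss
      exact hss hxt
    rcases Finset.mem_union.mp hx2 with h1 | h1
    · rw [Finset.mem_singleton.mp h1]
      refine Finset.mem_compl.mpr fun hBE => ?_
      have hmem : σ₀ t ∈ (univ.filter (fun t => siteA ν t ∈ E)).image ⇑σ₀ := by
        rw [(mapsCut_iff σ₀ E).mp (h.1 σ₀ hσ₀)]
        exact Finset.mem_filter.mpr ⟨Finset.mem_univ _, hBE⟩
      obtain ⟨t', ht'2, heq⟩ := Finset.mem_image.mp hmem
      have htt : t' = t := σ₀.injective heq
      exact ht' (htt ▸ (Finset.mem_filter.mp ht'2).2)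
    · rw [Finset.mem_singleton.mp h1]
      exact Finset.mem_compl.mpr ht'

lemma splits_of_pole {Ψ : Finset (Equiv.Perm (Fin ν))} {E : Finset (Fin (2 * ν))}
    (hne : Ψ.Nonempty) (h : PoleVia ν Ψ E) : SplitsAcross (rvbPoly ν Ψ) E := by
  classical
  obtain ⟨σ₀, hσ₀⟩ := hne
  refine ⟨∏ t ∈ univ.filter (fun t => siteA ν t ∈ E),
            (X (siteB ν (σ₀ t)) - X (siteA ν t)),
          ∑ σ ∈ Ψ, ∏ t ∈ univ.filter (fun t => ¬siteA ν t ∈ E),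
            (X (siteB ν (σ t)) - X (siteA ν t)), ?_, ?_, ?_⟩
  · rw [rvbPoly, Finset.mul_sum]
    refine Finset.sum_congr rfl fun σ hσ => ?_
    rw [covPoly, ← Finset.prod_filter_mul_prod_filter_not univ (fun t => siteA ν t ∈ E)]
    congr 1
    refine Finset.prod_congr rfl fun t ht => ?_
    rw [h.2 σ₀ hσ₀ σ hσ t (Finset.mem_filter.mp ht).2]
  · intro x hx
    obtain ⟨t, ht, hxt⟩ := Finset.mem_biUnion.mp (vars_prod _ hx)
    have ht' := Finset.mem_filter.mp ht
    have hx2 : x ∈ ({siteB ν (σ₀ t)} ∪ {siteA ν t} : Finset (Fin (2 * ν))) := by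
      have hss := vars_sub_subset (σ := Fin (2 * ν))
        (p := (X (siteB ν (σ₀ t)) : MvPolynomial (Fin (2 * ν)) ℂ)) (q := X (siteA ν t))
      rw [vars_X, vars_X] at hss
      exact hss hxt
    rcases Finset.mem_union.mp hx2 with h1 | h1
    · have hBE : σ₀ t ∈ univ.filter (fun u => siteB ν u ∈ E) := by
        rw [← (mapsCut_iff σ₀ E).mp (h.1 σ₀ hσ₀)]
        exact Finset.mem_image_of_mem _ ht
      rw [Finset.mem_singleton.mp h1]
      exact (Finset.mem_filter.mp hBE).2
    · rw [Finset.mem_singleton.mp h1]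
      exact ht'.2
  · intro x hx
    obtain ⟨σ, hσ, hxv⟩ := Finset.mem_biUnion.mp (vars_sum_subset _ _ hx)
    obtain ⟨t, ht, hxt⟩ := Finset.mem_biUnion.mp (vars_prod _ hxv)
    have ht' := (Finset.mem_filter.mp ht).2
    have hx2 : x ∈ ({siteB ν (σ t)} ∪ {siteA ν t} : Finset (Fin (2 * ν))) := by
      have hss := vars_sub_subset (σ := Fin (2 * ν))
        (p := (X (siteB ν (σ t)) : MvPolynomial (Fin (2 * ν)) ℂ)) (q := X (siteA ν t))
      rw [vars_X, vars_X] at hss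
      exact hss hxt
    rcases Finset.mem_union.mp hx2 with h1 | h1
    · rw [Finset.mem_singleton.mp h1]
      refine Finset.mem_compl.mpr fun hBE => ?_
      have hmem : σ t ∈ (univ.filter (fun t => siteA ν t ∈ E)).image ⇑σ := by
        rw [(mapsCut_iff σ E).mp (h.1 σ hσ)]
        exact Finset.mem_filter.mpr ⟨Finset.mem_univ _, hBE⟩
      obtain ⟨t', ht'2, heq⟩ := Finset.mem_image.mp hmem
      have htt : t' = t := σ.injective heq
      exact ht' (htt ▸ (Finset.mem_filter.mp ht'2).2)
    · rw [Finset.mem_singleton.mp h1]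
      exact Finset.mem_compl.mpr ht'


lemma coeff_MSU_split {Ψ : Finset (Equiv.Perm (Fin ν))} {E : Finset (Fin (2 * ν))}
    {p q : MvPolynomial (Fin (2 * ν)) ℂ}
    (hF : rvbPoly ν Ψ = p * q) (hp : p.vars ⊆ E) (hq : q.vars ⊆ Eᶜ)
    (S U : Finset (Fin ν)) :
    coeff (MSU ν S U) (rvbPoly ν Ψ)
      = coeff (MSU ν (S.filter fun t => siteA ν t ∈ E) (U.filter fun u => siteB ν u ∈ E)) p
        * coeff (MSU ν (S.filter fun t => siteA ν t ∉ E) (U.filter fun u => siteB ν u ∉ E)) q := by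
  classical
  rw [hF, split_coeff hp hq, MSU_filter, MSU_filter]

lemma sides_of_splits {Ψ : Finset (Equiv.Perm (Fin ν))} {E : Finset (Fin (2 * ν))}
    {p q : MvPolynomial (Fin (2 * ν)) ℂ}
    (hF : rvbPoly ν Ψ = p * q) (hp : p.vars ⊆ E) (hq : q.vars ⊆ Eᶜ) :
    ∀ σ ∈ Ψ, (∀ t, siteA ν t ∈ E → siteB ν (σ t) ∈ E)
      ∧ (∀ t, siteA ν t ∉ E → siteB ν (σ t) ∉ E) := by
  classical
  intro σ hσ
  set AE : Finset (Fin ν) := univ.filter (fun t => siteA ν t ∈ E) with hAE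
  have hAEc : AEᶜ = univ.filter (fun t => siteA ν t ∉ E) := by
    ext x; simp [hAE]
  have fe1 : AEᶜ.filter (fun t => siteA ν t ∈ E) = ∅ := by
    ext x; simp [hAE]
  have fe2 : AEᶜ.filter (fun t => siteA ν t ∉ E) = AEᶜ := by
    ext x; simp [hAE]
  have fe3 : AE.filter (fun t => siteA ν t ∈ E) = AE := by
    ext x; simp [hAE]
  have fe4 : AE.filter (fun t => siteA ν t ∉ E) = ∅ := by
    ext x; simp [hAE]
  have funiv1 : (univ : Finset (Fin ν)).filter (fun t => siteA ν t ∈ E) = AE := rfl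
  have funiv2 : (univ : Finset (Fin ν)).filter (fun t => siteA ν t ∉ E) = AEᶜ := hAEc.symm
  have huniv : coeff (MSU ν univ ∅) (rvbPoly ν Ψ) ≠ 0 := by
    rw [coeff_rvbPoly]
    have hfil : Ψ.filter
        (fun σ' : Equiv.Perm (Fin ν) => (univ : Finset (Fin ν))ᶜ.image (⇑σ') = ∅) = Ψ :=
      Finset.filter_true_of_mem fun σ' _ => by simp
    rw [hfil]
    exact mul_ne_zero (pow_ne_zero _ (neg_ne_zero.mpr one_ne_zero))
      (Nat.cast_ne_zero.mpr (Finset.card_ne_zero_of_mem hσ))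
  have hP0 : coeff (MSU ν AE ∅) p ≠ 0 ∧ coeff (MSU ν AEᶜ ∅) q ≠ 0 := by
    have h := coeff_MSU_split hF hp hq univ ∅
    rw [funiv1, funiv2, Finset.filter_empty, Finset.filter_empty] at h
    rw [h] at huniv
    exact mul_ne_zero_iff.mp huniv
  have hccompl : AE.card + AEᶜ.card = ν := by
    rw [Finset.card_add_card_compl]
    exact Fintype.card_fin ν
  constructor
  · intro t ht
    have h1 : coeff (MSU ν AEᶜ (AE.image ⇑σ)) (rvbPoly ν Ψ) ≠ 0 := by
      rw [coeff_rvbPoly]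
      exact mul_ne_zero (pow_ne_zero _ (neg_ne_zero.mpr one_ne_zero))
        (Nat.cast_ne_zero.mpr (Finset.card_ne_zero_of_mem
          (Finset.mem_filter.mpr ⟨hσ, by rw [compl_compl]⟩)))
    set U' : Finset (Fin ν) := (AE.image ⇑σ).filter (fun u => siteB ν u ∈ E) with hU'
    have hP1 : coeff (MSU ν ∅ U') p ≠ 0 := by
      have h := coeff_MSU_split hF hp hq AEᶜ (AE.image ⇑σ)
      rw [fe1, fe2] at h
      rw [h] at h1
      exact (mul_ne_zero_iff.mp h1).1
    have hU'1 : U'.filter (fun u => siteB ν u ∈ E) = U' := by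
      ext x; simp only [hU', Finset.mem_filter]; tauto
    have hU'2 : U'.filter (fun u => siteB ν u ∉ E) = ∅ := by
      ext x; simp only [hU', Finset.mem_filter, Finset.notMem_empty, iff_false]; tauto
    have hmix : coeff (MSU ν AEᶜ U') (rvbPoly ν Ψ) ≠ 0 := by
      have h := coeff_MSU_split hF hp hq AEᶜ U'
      rw [fe1, fe2, hU'1, hU'2] at h
      rw [h]
      exact mul_ne_zero hP1 hP0.2
    have hcard := degree_eq_of_coeff_ne hmix
    have himg : (AE.image ⇑σ).card = AE.card := Finset.card_image_of_injective _ σ.injective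
    have hle : (AE.image ⇑σ).card ≤ U'.card := by omega
    have hUeq : U' = AE.image ⇑σ :=
      Finset.eq_of_subset_of_card_le (Finset.filter_subset _ _) hle
    have hmem : σ t ∈ U' := by
      rw [hUeq]
      exact Finset.mem_image_of_mem _ (Finset.mem_filter.mpr ⟨Finset.mem_univ _, ht⟩)
    exact (Finset.mem_filter.mp hmem).2
  · intro t ht
    have h2 : coeff (MSU ν AE (AEᶜ.image ⇑σ)) (rvbPoly ν Ψ) ≠ 0 := by
      rw [coeff_rvbPoly]
      exact mul_ne_zero (pow_ne_zero _ (neg_ne_zero.mpr one_ne_zero))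
        (Nat.cast_ne_zero.mpr (Finset.card_ne_zero_of_mem
          (Finset.mem_filter.mpr ⟨hσ, rfl⟩)))
    set V' : Finset (Fin ν) := (AEᶜ.image ⇑σ).filter (fun u => siteB ν u ∉ E) with hV'
    have hQ1 : coeff (MSU ν ∅ V') q ≠ 0 := by
      have h := coeff_MSU_split hF hp hq AE (AEᶜ.image ⇑σ)
      rw [fe3, fe4] at h
      rw [h] at h2
      exact (mul_ne_zero_iff.mp h2).2
    have hV'1 : V'.filter (fun u => siteB ν u ∉ E) = V' := by
      ext x; simp only [hV', Finset.mem_filter]; tauto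
    have hV'2 : V'.filter (fun u => siteB ν u ∈ E) = ∅ := by
      ext x; simp only [hV', Finset.mem_filter, Finset.notMem_empty, iff_false]; tauto
    have hmix : coeff (MSU ν AE V') (rvbPoly ν Ψ) ≠ 0 := by
      have h := coeff_MSU_split hF hp hq AE V'
      rw [fe3, fe4, hV'1, hV'2] at h
      rw [h]
      exact mul_ne_zero hP0.1 hQ1
    have hcard := degree_eq_of_coeff_ne hmix
    have himg : (AEᶜ.image ⇑σ).card = AEᶜ.card := Finset.card_image_of_injective _ σ.injective
    have hle : (AEᶜ.image ⇑σ).card ≤ V'.card := by omega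
    have hVeq : V' = AEᶜ.image ⇑σ :=
      Finset.eq_of_subset_of_card_le (Finset.filter_subset _ _) hle
    have hmem : σ t ∈ V' := by
      rw [hVeq]
      refine Finset.mem_image_of_mem _ ?_
      rw [hAEc]
      exact Finset.mem_filter.mpr ⟨Finset.mem_univ _, ht⟩
    exact (Finset.mem_filter.mp hmem).2

lemma mapsCut_of_sides {E : Finset (Fin (2 * ν))}
    {σ : Equiv.Perm (Fin ν)}
    (ha : ∀ t, siteA ν t ∈ E → siteB ν (σ t) ∈ E)
    (hb : ∀ t, siteA ν t ∉ E → siteB ν (σ t) ∉ E) : MapsCut ν σ E := by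
  rw [mapsCut_iff]
  ext u
  simp only [Finset.mem_image, Finset.mem_filter, Finset.mem_univ, true_and]
  constructor
  · rintro ⟨t, ht, rfl⟩
    exact ha t ht
  · intro hu
    refine ⟨σ.symm u, ?_, σ.apply_symm_apply u⟩
    by_contra hA
    exact hb _ hA (by rwa [σ.apply_symm_apply])


lemma key_ident {Ψ : Finset (Equiv.Perm (Fin ν))} {E : Finset (Fin (2 * ν))}
    {p q : MvPolynomial (Fin (2 * ν)) ℂ}
    (hF : rvbPoly ν Ψ = p * q) (hp : p.vars ⊆ E) (hq : q.vars ⊆ Eᶜ)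
    {t₀ u₀ t u : Fin ν}
    (ht₀ : siteA ν t₀ ∈ E) (ht : siteA ν t ∉ E)
    (hu₀ : siteB ν u₀ ∈ E) (hu : siteB ν u ∉ E) :
    (Ψ.filter fun σ => σ t₀ = u₀).card * (Ψ.filter fun σ => σ t = u).card
      = Ψ.card * (Ψ.filter fun σ => σ t₀ = u₀ ∧ σ t = u).card := by
  classical
  have hsides := sides_of_splits hF hp hq
  have htt : t₀ ≠ t := fun h => ht (h ▸ ht₀)
  have huu : u₀ ≠ u := fun h => hu (h ▸ hu₀)
  set BE : Finset (Fin ν) := univ.filter (fun v => siteB ν v ∈ E) with hBE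
  set BEc : Finset (Fin ν) := univ.filter (fun v => siteB ν v ∉ E) with hBEc
  set A : ℂ := coeff (MSU ν ∅ BE) p with hA
  set B : ℂ := coeff (MSU ν ∅ BEc) q with hB
  set P1 : ℂ := coeff (MSU ν {t₀} (BE.erase u₀)) p with hP1
  set Q1 : ℂ := coeff (MSU ν {t} (BEc.erase u)) q with hQ1
  -- filter identities on index sets
  have ft1 : ({t₀} : Finset (Fin ν)).filter (fun x => siteA ν x ∈ E) = {t₀} := by
    ext x; simp only [Finset.mem_filter, Finset.mem_singleton]
    constructor
    · tauto
    · rintro rfl; exact ⟨rfl, ht₀⟩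
  have ft2 : ({t₀} : Finset (Fin ν)).filter (fun x => siteA ν x ∉ E) = ∅ := by
    ext x; simp only [Finset.mem_filter, Finset.mem_singleton, Finset.notMem_empty, iff_false]
    rintro ⟨rfl, hx⟩; exact hx ht₀
  have ft3 : ({t} : Finset (Fin ν)).filter (fun x => siteA ν x ∈ E) = ∅ := by
    ext x; simp only [Finset.mem_filter, Finset.mem_singleton, Finset.notMem_empty, iff_false]
    rintro ⟨rfl, hx⟩; exact ht hx
  have ft4 : ({t} : Finset (Fin ν)).filter (fun x => siteA ν x ∉ E) = {t} := by
    ext x; simp only [Finset.mem_filter, Finset.mem_singleton]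
    constructor
    · tauto
    · rintro rfl; exact ⟨rfl, ht⟩
  have fp1 : ({t₀, t} : Finset (Fin ν)).filter (fun x => siteA ν x ∈ E) = {t₀} := by
    ext x
    simp only [Finset.mem_filter, Finset.mem_insert, Finset.mem_singleton]
    constructor
    · rintro ⟨rfl | rfl, hx⟩
      · rfl
      · exact absurd hx ht
    · rintro rfl; exact ⟨Or.inl rfl, ht₀⟩
  have fp2 : ({t₀, t} : Finset (Fin ν)).filter (fun x => siteA ν x ∉ E) = {t} := by
    ext x
    simp only [Finset.mem_filter, Finset.mem_insert, Finset.mem_singleton]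
    constructor
    · rintro ⟨rfl | rfl, hx⟩
      · exact absurd ht₀ hx
      · rfl
    · rintro rfl; exact ⟨Or.inr rfl, ht⟩
  have fu1 : (univ : Finset (Fin ν)).filter (fun v => siteB ν v ∈ E) = BE := rfl
  have fu2 : (univ : Finset (Fin ν)).filter (fun v => siteB ν v ∉ E) = BEc := rfl
  have fe1 : (univ.erase u₀).filter (fun v => siteB ν v ∈ E) = BE.erase u₀ := by
    ext x
    simp only [Finset.mem_filter, Finset.mem_erase, hBE, Finset.mem_univ, true_and, and_true]
  have fe2 : (univ.erase u₀).filter (fun v => siteB ν v ∉ E) = BEc := by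
    ext x
    simp only [Finset.mem_filter, Finset.mem_erase, hBEc, Finset.mem_univ, true_and, and_true]
    constructor
    · tauto
    · intro hx
      exact ⟨fun hxe => hx (hxe ▸ hu₀), hx⟩
  have fe3 : (univ.erase u).filter (fun v => siteB ν v ∈ E) = BE := by
    ext x
    simp only [Finset.mem_filter, Finset.mem_erase, hBE, Finset.mem_univ, true_and, and_true]
    constructor
    · tauto
    · intro hx
      exact ⟨fun hxe => hu (hxe ▸ hx), hx⟩
  have fe4 : (univ.erase u).filter (fun v => siteB ν v ∉ E) = BEc.erase u := by
    ext x
    simp only [Finset.mem_filter, Finset.mem_erase, hBEc, Finset.mem_univ, true_and, and_true]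
  have fq1 : (univ \ {u₀, u}).filter (fun v => siteB ν v ∈ E) = BE.erase u₀ := by
    ext x
    simp only [Finset.mem_filter, Finset.mem_sdiff, Finset.mem_erase, hBE, Finset.mem_univ,
      true_and, and_true, Finset.mem_insert, Finset.mem_singleton, not_or]
    constructor
    · tauto
    · rintro ⟨hxu, hx⟩
      exact ⟨⟨hxu, fun hxe => hu (hxe ▸ hx)⟩, hx⟩
  have fq2 : (univ \ {u₀, u}).filter (fun v => siteB ν v ∉ E) = BEc.erase u := by
    ext x
    simp only [Finset.mem_filter, Finset.mem_sdiff, Finset.mem_erase, hBEc, Finset.mem_univ,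
      true_and, and_true, Finset.mem_insert, Finset.mem_singleton, not_or]
    constructor
    · tauto
    · rintro ⟨hxu, hx⟩
      exact ⟨⟨fun hxe => hx (hxe ▸ hu₀), hxu⟩, hx⟩
  -- the four coefficient identities
  have e0 : (Ψ.card : ℂ) = A * B := by
    have h := coeff_MSU_split hF hp hq ∅ univ
    rw [Finset.filter_empty, Finset.filter_empty, fu1, fu2] at h
    rw [coeff_rvbPoly] at h
    have hfil : Ψ.filter
        (fun σ' : Equiv.Perm (Fin ν) => (∅ : Finset (Fin ν))ᶜ.image (⇑σ') = univ) = Ψ :=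
      Finset.filter_true_of_mem fun σ' _ => by
        rw [Finset.compl_empty, image_perm_univ]
    rw [hfil] at h
    simpa using h
  have e1 : ((Ψ.filter fun σ => σ t₀ = u₀).card : ℂ) = -(P1 * B) := by
    have h := coeff_MSU_split hF hp hq {t₀} (univ.erase u₀)
    rw [ft1, ft2, fe1, fe2] at h
    rw [coeff_rvbPoly] at h
    have hfil : Ψ.filter
        (fun σ' : Equiv.Perm (Fin ν) => ({t₀} : Finset (Fin ν))ᶜ.image (⇑σ') = univ.erase u₀)
        = Ψ.filter (fun σ' => σ' t₀ = u₀) :=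
      Finset.filter_congr fun σ' _ => by rw [single_cond]
    rw [hfil] at h
    simp only [Finset.card_singleton, pow_one, neg_one_mul] at h
    exact neg_eq_iff_eq_neg.mp h
  have e2 : ((Ψ.filter fun σ => σ t = u).card : ℂ) = -(A * Q1) := by
    have h := coeff_MSU_split hF hp hq {t} (univ.erase u)
    rw [ft3, ft4, fe3, fe4] at h
    rw [coeff_rvbPoly] at h
    have hfil : Ψ.filter
        (fun σ' : Equiv.Perm (Fin ν) => ({t} : Finset (Fin ν))ᶜ.image (⇑σ') = univ.erase u)
        = Ψ.filter (fun σ' => σ' t = u) :=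
      Finset.filter_congr fun σ' _ => by rw [single_cond]
    rw [hfil] at h
    simp only [Finset.card_singleton, pow_one, neg_one_mul] at h
    exact neg_eq_iff_eq_neg.mp h
  have e3 : ((Ψ.filter fun σ => σ t₀ = u₀ ∧ σ t = u).card : ℂ) = P1 * Q1 := by
    have h := coeff_MSU_split hF hp hq {t₀, t} (univ \ {u₀, u})
    rw [fp1, fp2, fq1, fq2] at h
    rw [coeff_rvbPoly] at h
    have hfil : Ψ.filter
        (fun σ' : Equiv.Perm (Fin ν) => ({t₀, t} : Finset (Fin ν))ᶜ.image (⇑σ') = univ \ {u₀, u})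
        = Ψ.filter (fun σ' => σ' t₀ = u₀ ∧ σ' t = u) :=
      Finset.filter_congr fun σ' hσ' => by
        rw [pair_cond _ htt huu]
        constructor
        · rintro (hc | ⟨h1, h2⟩)
          · exact hc
          · exact absurd ((hsides σ' hσ').1 t₀ ht₀) (h1 ▸ hu)
        · exact Or.inl
    rw [hfil, Finset.card_pair htt] at h
    simpa using h
  have hfinal : (((Ψ.filter fun σ => σ t₀ = u₀).card * (Ψ.filter fun σ => σ t = u).card : ℕ) : ℂ)
      = ((Ψ.card * (Ψ.filter fun σ => σ t₀ = u₀ ∧ σ t = u).card : ℕ) : ℂ) := by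
    push_cast
    rw [e1, e2, e0, e3]
    ring
  exact_mod_cast hfinal

/-! ### Reverse direction -/

lemma flat_or_pole_of_splits {Ψ : Finset (Equiv.Perm (Fin ν))} {E : Finset (Fin (2 * ν))}
    (hprime : Nat.Prime Ψ.card) (h : SplitsAcross (rvbPoly ν Ψ) E) :
    FlatVia ν Ψ E ∨ PoleVia ν Ψ E := by
  classical
  obtain ⟨p, q, hF, hp, hq⟩ := h
  have hsides := sides_of_splits hF hp hq
  have hMC : ∀ σ ∈ Ψ, MapsCut ν σ E := fun σ hσ =>
    mapsCut_of_sides (hsides σ hσ).1 (hsides σ hσ).2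
  have hagree : ∀ (t u : Fin ν), (Ψ.filter fun σ => σ t = u).card = Ψ.card →
      ∀ σ' ∈ Ψ, σ' t = u := by
    intro t u hcard σ' hσ'
    have hfe : Ψ.filter (fun σ => σ t = u) = Ψ :=
      Finset.eq_of_subset_of_card_le (Finset.filter_subset _ _) hcard.symm.le
    rw [← hfe] at hσ'
    exact (Finset.mem_filter.mp hσ').2
  by_cases hcase : ∃ t₀ u₀, siteA ν t₀ ∈ E ∧
      0 < (Ψ.filter fun σ => σ t₀ = u₀).card ∧ (Ψ.filter fun σ => σ t₀ = u₀).card < Ψ.card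
  · left
    obtain ⟨t₀, u₀, ht₀, hpos, hlt⟩ := hcase
    refine ⟨hMC, fun σ₁ hσ₁ σ₂ hσ₂ t ht => ?_⟩
    obtain ⟨σ', hσ'mem, hσ't₀⟩ : ∃ σ' ∈ Ψ, σ' t₀ = u₀ := by
      obtain ⟨σ', hmem⟩ := Finset.card_pos.mp hpos
      exact ⟨σ', (Finset.mem_filter.mp hmem).1, (Finset.mem_filter.mp hmem).2⟩
    have hu₀ : siteB ν u₀ ∈ E := hσ't₀ ▸ (hsides σ' hσ'mem).1 t₀ ht₀
    have hu : siteB ν (σ₁ t) ∉ E := (hsides σ₁ hσ₁).2 t ht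
    have hkey := key_ident hF hp hq ht₀ ht hu₀ hu
    have hdvd : Ψ.card ∣ (Ψ.filter fun σ => σ t₀ = u₀).card
        * (Ψ.filter fun σ => σ t = σ₁ t).card := ⟨_, hkey⟩
    have hdvd2 : Ψ.card ∣ (Ψ.filter fun σ => σ t = σ₁ t).card := by
      rcases (Nat.Prime.dvd_mul hprime).mp hdvd with hd | hd
      · exact absurd (Nat.le_of_dvd hpos hd) (not_le.mpr hlt)
      · exact hd
    have hpos2 : 0 < (Ψ.filter fun σ => σ t = σ₁ t).card :=
      Finset.card_pos.mpr ⟨σ₁, Finset.mem_filter.mpr ⟨hσ₁, rfl⟩⟩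
    have hcards : (Ψ.filter fun σ => σ t = σ₁ t).card = Ψ.card :=
      le_antisymm (Finset.card_filter_le _ _) (Nat.le_of_dvd hpos2 hdvd2)
    exact (hagree t (σ₁ t) hcards σ₂ hσ₂).symm
  · right
    refine ⟨hMC, fun σ₁ hσ₁ σ₂ hσ₂ t ht => ?_⟩
    push_neg at hcase
    have hpos : 0 < (Ψ.filter fun σ => σ t = σ₁ t).card :=
      Finset.card_pos.mpr ⟨σ₁, Finset.mem_filter.mpr ⟨hσ₁, rfl⟩⟩
    have hle : (Ψ.filter fun σ => σ t = σ₁ t).card ≤ Ψ.card := Finset.card_filter_le _ _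
    have hge := hcase t (σ₁ t) ht hpos
    have hcards : (Ψ.filter fun σ => σ t = σ₁ t).card = Ψ.card := by omega
    exact (hagree t (σ₁ t) hcards σ₂ hσ₂).symm

end RVBProof

/-- Theorem 3.4, Dichotomy: if `s = #Ψ` is prime, then exactly
one of the following holds: (a) `Ψ` is flat or a pole; (b) `F_Ψ` splits across no
nontrivial bipartition.  Equivalently, `F_Ψ` splits across some nontrivial
bipartition iff `Ψ` is flat or a pole. -/
theorem stmt_13 (ν : ℕ) (hν : 2 ≤ ν) (Ψ : Finset (Equiv.Perm (Fin ν)))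
    (hΨ : 2 ≤ Ψ.card) (hprime : Nat.Prime Ψ.card) :
    (∃ E : Finset (Fin (2 * ν)), E.Nonempty ∧ E ≠ Finset.univ ∧
        (FlatVia ν Ψ E ∨ PoleVia ν Ψ E))
      ↔ ∃ E : Finset (Fin (2 * ν)), E.Nonempty ∧ E ≠ Finset.univ ∧
          SplitsAcross (rvbPoly ν Ψ) E := by
  constructor
  · rintro ⟨E, hne, hpr, hfp⟩
    refine ⟨E, hne, hpr, ?_⟩
    have hΨne : Ψ.Nonempty := Finset.card_pos.mp (by omega)
    rcases hfp with hf | hp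
    · exact RVBProof.splits_of_flat hΨne hf
    · exact RVBProof.splits_of_pole hΨne hp
  · rintro ⟨E, hne, hpr, hsp⟩
    exact ⟨E, hne, hpr, RVBProof.flat_or_pole_of_splits hprime hsp⟩
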